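/- Let f : [0,∞) → ℝ be càdlàg, fix t ≥ 0, and set T = sup{ s ∈ [0,t] : f(s−) ∧ f(s) = inf_{u ∈ [0,s]} f(u) } (with f(0−) := f(0)). Then inf_{s ∈ [0,t]} (f(s) ∧ 0) = f(T−) ∧ f(T) ∧ 0. -/

import Mathlib

open MeasureTheory Filter Topology Set

/-- A function `f : ℝ → ℝ` viewed on `[0,∞)` is càdlàg. -/
def Cadlag (f : ℝ → ℝ) : Prop :=
  (∀ t : ℝ, 0 ≤ t → ContinuousWithinAt f (Set.Ici t) t) ∧
  (∀ t : ℝ, 0 < t → ∃ l : ℝ, Filter.Tendsto f (nhdsWithin t (Set.Iio t)) (nhds l))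

/-- for a càdlàg `f`, `t ≥ 0`, and
`T = sup{ s ∈ [0,t] : f(s-) ∧ f(s) = inf_{u∈[0,s]} f(u) }` (with `f(0-) := f 0`,
encoded by a function `flm` giving the left limits), we have
`inf_{s∈[0,t]} (f s ∧ 0) = f(T-) ∧ f(T) ∧ 0`. -/
theorem stmt2 (f : ℝ → ℝ) (hf : Cadlag f) (t : ℝ) (ht : 0 ≤ t)
    (flm : ℝ → ℝ) (hflm0 : flm 0 = f 0)
    (hflm : ∀ s : ℝ, 0 < s → Filter.Tendsto f (nhdsWithin s (Set.Iio s)) (nhds (flm s)))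
    (T : ℝ)
    (hT : T = sSup {s : ℝ | s ∈ Set.Icc 0 t ∧
      min (flm s) (f s) = sInf (f '' Set.Icc 0 s)}) :
    sInf ((fun s => min (f s) 0) '' Set.Icc 0 t) = min (flm T) (min (f T) 0) := by
  have hIcc : (Set.Icc (0:ℝ) t).Nonempty := ⟨0, le_refl 0, ht⟩
  -- Step 1: f is bounded below on [0,t]
  have key : ∀ x : ℝ, ∃ C : ℝ, ∀ᶠ u in 𝓝 x, x ∈ Icc (0:ℝ) t → u ∈ Icc (0:ℝ) t → C ≤ f u := by
    intro x
    by_cases hx : x ∈ Icc (0:ℝ) t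
    · have hR : ∀ᶠ u in 𝓝 x, u ∈ Ici x → f x - 1 < f u := by
        have h2 : ∀ᶠ u in 𝓝[Ici x] x, f x - 1 < f u :=
          (hf.1 x hx.1).eventually (eventually_gt_nhds (by linarith))
        rwa [eventually_nhdsWithin_iff] at h2
      rcases eq_or_lt_of_le hx.1 with h0 | h0
      · refine ⟨f x - 1, ?_⟩
        filter_upwards [hR] with u hu _ hmem
        exact (hu (h0 ▸ hmem.1)).le
      · have hL : ∀ᶠ u in 𝓝 x, u ∈ Iio x → flm x - 1 < f u := by
          have h2 : ∀ᶠ u in 𝓝[Iio x] x, flm x - 1 < f u :=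
            (hflm x h0).eventually (eventually_gt_nhds (by linarith))
          rwa [eventually_nhdsWithin_iff] at h2
        refine ⟨min (f x - 1) (flm x - 1), ?_⟩
        filter_upwards [hR, hL] with u h1 h2 _ _
        rcases lt_or_ge u x with h | h
        · exact le_trans (min_le_right _ _) (h2 h).le
        · exact le_trans (min_le_left _ _) (h1 h).le
    · exact ⟨0, Eventually.of_forall fun u h => absurd h hx⟩
  choose C hC using key
  have hbdd : BddBelow (f '' Icc (0:ℝ) t) := by
    obtain ⟨F, hFmem, hFcov⟩ := isCompact_Icc.elim_nhds_subcover
      (fun x => {u | x ∈ Icc (0:ℝ) t → u ∈ Icc (0:ℝ) t → C x ≤ f u}) (fun x _ => hC x)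
    have hFne : F.Nonempty := by
      obtain ⟨x, hx, -⟩ := mem_iUnion₂.1 (hFcov ⟨le_refl 0, ht⟩)
      exact ⟨x, hx⟩
    refine ⟨F.inf' hFne C, ?_⟩
    rintro y ⟨u, hu, rfl⟩
    obtain ⟨x, hxF, hxU⟩ := mem_iUnion₂.1 (hFcov hu)
    exact le_trans (Finset.inf'_le C hxF) (hxU (hFmem x hxF) hu)
  have hbdds : ∀ s : ℝ, s ≤ t → BddBelow (f '' Icc (0:ℝ) s) :=
    fun s hs => hbdd.mono (image_mono (f := f) (Icc_subset_Icc_right hs))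
  -- Basic facts about S
  set S : Set ℝ := {s : ℝ | s ∈ Set.Icc 0 t ∧
      min (flm s) (f s) = sInf (f '' Set.Icc 0 s)} with hSdef
  have h0S : (0:ℝ) ∈ S := by
    refine ⟨⟨le_refl 0, ht⟩, ?_⟩
    rw [hflm0, Set.Icc_self, Set.image_singleton, csInf_singleton, min_self]
  have hSne : S.Nonempty := ⟨0, h0S⟩
  have hSbdd : BddAbove S := ⟨t, fun s hs => hs.1.2⟩
  have hT0 : 0 ≤ T := hT ▸ le_csSup hSbdd h0S
  have hTt : T ≤ t := hT ▸ csSup_le hSne (fun s hs => hs.1.2)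
  -- Step 2 : T ∈ S
  have hTS : T ∈ S := by
    by_contra hTS
    have hTpos : 0 < T := by
      rcases eq_or_lt_of_le hT0 with h | h
      · exact absurd (h ▸ h0S) hTS
      · exact h
    -- key claim: flm T ≤ f u for all u ∈ [0, T)
    have hkey : ∀ u : ℝ, 0 ≤ u → u < T → flm T ≤ f u := by
      intro u hu0 huT
      -- construct approximating sequence
      have hseq : ∀ n : ℕ, ∃ v : ℝ, v ∈ Ioo (max u (T - 1/(n+1))) T ∧ f v ≤ f u + 1/(n+1) := by
        intro n
        have hpos : (0:ℝ) < 1/(n+1) := by positivity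
        have hb : max u (T - 1/(n+1)) < T := max_lt huT (by linarith)
        obtain ⟨s, hsS, hbs⟩ := exists_lt_of_lt_csSup hSne (hT ▸ hb)
        rw [← hT] at hbs
        have hsT : s < T := lt_of_le_of_ne (hT ▸ le_csSup hSbdd hsS) (fun h => hTS (h ▸ hsS))
        have hus : u < s := lt_of_le_of_lt (le_max_left _ _) hbs
        have hmins : min (flm s) (f s) ≤ f u := by
          rw [hsS.2]
          exact csInf_le (hbdds s hsS.1.2) ⟨u, ⟨hu0, hus.le⟩, rfl⟩
        rcases le_total (f s) (flm s) with hc | hc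
        · exact ⟨s, ⟨hbs, hsT⟩, by rw [min_eq_right hc] at hmins; linarith⟩
        · -- flm s ≤ f u; find w < s close with f w < flm s + 1/(n+1)
          rw [min_eq_left hc] at hmins
          have hs0 : 0 < s := lt_of_le_of_lt hu0 hus
          have hev : ∀ᶠ w in 𝓝[Iio s] s,
              f w < flm s + 1/(n+1) ∧ w ∈ Ioi (max u (T - 1/(n+1))) ∧ w ∈ Iio s := by
            refine (((hflm s hs0).eventually (eventually_lt_nhds (by linarith))).and
              (Filter.Eventually.and ?_ self_mem_nhdsWithin)).mono (fun w hw => ⟨hw.1, hw.2⟩)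
            exact eventually_nhdsWithin_of_eventually_nhds (eventually_gt_nhds hbs)
          obtain ⟨w, hw1, hw2, hw3⟩ := hev.exists
          exact ⟨w, ⟨hw2, lt_trans hw3 hsT⟩, by linarith⟩
      choose v hv1 hv2 using hseq
      -- v n → T from the left
      have hvlt : ∀ n, v n < T := fun n => (hv1 n).2
      have hvgt : ∀ n : ℕ, T - 1/(n+1) < v n :=
        fun n => lt_of_le_of_lt (le_max_right _ _) (hv1 n).1
      have htend0 : Tendsto (fun n : ℕ => 1/((n:ℝ)+1)) atTop (𝓝 0) :=
        tendsto_one_div_add_atTop_nhds_zero_nat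
      have hvT : Tendsto v atTop (𝓝 T) := by
        have h1 : Tendsto (fun n : ℕ => T - 1/((n:ℝ)+1)) atTop (𝓝 T) := by
          simpa using tendsto_const_nhds.sub htend0
        exact tendsto_of_tendsto_of_tendsto_of_le_of_le h1 tendsto_const_nhds
          (fun n => (hvgt n).le) (fun n => (hvlt n).le)
      have hfv : Tendsto (fun n => f (v n)) atTop (𝓝 (flm T)) :=
        (hflm T hTpos).comp (tendsto_nhdsWithin_of_tendsto_nhds_of_eventually_within v hvT
          (Eventually.of_forall hvlt))
      have hfu : Tendsto (fun n : ℕ => f u + 1/((n:ℝ)+1)) atTop (𝓝 (f u)) := by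
        simpa using tendsto_const_nhds.add htend0
      exact le_of_tendsto_of_tendsto' hfv hfu hv2
    -- conclude T ∈ S, contradiction
    refine hTS ⟨⟨hT0, hTt⟩, ?_⟩
    refine le_antisymm ?_ (le_min ?_ ?_)
    · refine le_csInf (⟨f T, T, ⟨hT0, le_refl T⟩, rfl⟩) ?_
      rintro y ⟨u, hu, rfl⟩
      rcases eq_or_lt_of_le hu.2 with h | h
      · rw [h]; exact min_le_right _ _
      · exact le_trans (min_le_left _ _) (hkey u hu.1 h)
    · -- sInf ≤ flm T
      refine ge_of_tendsto (hflm T hTpos) ?_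
      filter_upwards [eventually_nhdsWithin_of_eventually_nhds (eventually_gt_nhds hTpos),
        self_mem_nhdsWithin] with w hw1 hw2
      exact csInf_le (hbdds T hTt) ⟨w, ⟨hw1.le, hw2.le⟩, rfl⟩
    · exact csInf_le (hbdds T hTt) ⟨T, ⟨hT0, le_refl T⟩, rfl⟩
  have hcfT : sInf (f '' Icc (0:ℝ) T) ≤ f T := csInf_le (hbdds T hTt) ⟨T, ⟨hT0, le_refl T⟩, rfl⟩
  -- Step 3 : the infimum over [0,t] equals the infimum over [0,T]
  have heq : sInf (f '' Icc (0:ℝ) t) = sInf (f '' Icc (0:ℝ) T) := by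
    refine le_antisymm (csInf_le_csInf hbdd ⟨f T, T, ⟨hT0, le_refl T⟩, rfl⟩
      (image_mono (f := f) (Icc_subset_Icc_right hTt))) ?_
    by_contra h
    push_neg at h
    set c := sInf (f '' Icc (0:ℝ) T) with hc
    obtain ⟨c', hc'1, hc'2⟩ := exists_between h
    obtain ⟨y, ⟨u0, hu0, rfl⟩, hy⟩ := exists_lt_of_csInf_lt (hIcc.image f) hc'1
    set B : Set ℝ := {s : ℝ | s ∈ Icc (0:ℝ) t ∧ f s < c'} with hB
    have hBne : B.Nonempty := ⟨u0, hu0, hy⟩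
    have hBbdd : BddBelow B := ⟨0, fun s hs => hs.1.1⟩
    have hBT : ∀ s ∈ B, T < s := by
      intro s hs
      by_contra hle
      push_neg at hle
      have h1 : c ≤ f s := csInf_le (hbdds T hTt) ⟨s, ⟨hs.1.1, hle⟩, rfl⟩
      have h2 : f s < c' := hs.2
      linarith
    set r := sInf B with hr
    have hrT : T ≤ r := le_csInf hBne fun s hs => (hBT s hs).le
    have hr0 : 0 ≤ r := le_trans hT0 hrT
    have hrt : r ≤ t := le_trans (csInf_le hBbdd hBne.choose_spec) hBne.choose_spec.1.2
    have hfr : f r ≤ c' := by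
      have hseq : ∀ n : ℕ, ∃ s : ℝ, s ∈ B ∧ s < r + 1/(n+1) := by
        intro n
        have : r < r + 1/(n+1) := by
          have : (0:ℝ) < 1/(n+1) := by positivity
          linarith
        obtain ⟨s, hs1, hs2⟩ := exists_lt_of_csInf_lt hBne this
        exact ⟨s, hs1, hs2⟩
      choose v hv1 hv2 using hseq
      have hvr : ∀ n, r ≤ v n := fun n => csInf_le hBbdd (hv1 n)
      have htend0 : Tendsto (fun n : ℕ => 1/((n:ℝ)+1)) atTop (𝓝 0) :=
        tendsto_one_div_add_atTop_nhds_zero_nat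
      have hvt : Tendsto v atTop (𝓝 r) := by
        have h1 : Tendsto (fun n : ℕ => r + 1/((n:ℝ)+1)) atTop (𝓝 r) := by
          simpa using tendsto_const_nhds.add htend0
        exact tendsto_of_tendsto_of_tendsto_of_le_of_le tendsto_const_nhds h1
          hvr (fun n => (hv2 n).le)
      have hfv : Tendsto (fun n => f (v n)) atTop (𝓝 (f r)) :=
        (hf.1 r hr0).tendsto.comp (tendsto_nhdsWithin_of_tendsto_nhds_of_eventually_within v hvt
          (Eventually.of_forall hvr))
      exact le_of_tendsto hfv (Eventually.of_forall fun n => (hv1 n).2.le)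
    have hlow : ∀ u : ℝ, 0 ≤ u → u < r → c' ≤ f u := by
      intro u hu0 hur
      by_contra hcon
      push_neg at hcon
      have : u ∈ B := ⟨⟨hu0, le_trans hur.le hrt⟩, hcon⟩
      exact absurd (csInf_le hBbdd this) (not_le.2 hur)
    rcases eq_or_lt_of_le hr0 with hreq | hrpos
    · -- r = 0, hence T = 0 = r, contradiction
      have hT0' : T = 0 := le_antisymm (hrT.trans hreq.symm.le) hT0
      have h1 : f T = f r := by rw [hT0', hreq]
      linarith [hcfT]
    · -- r > 0
      have hflmr : c' ≤ flm r := by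
        refine ge_of_tendsto (hflm r hrpos) ?_
        filter_upwards [eventually_nhdsWithin_of_eventually_nhds (eventually_gt_nhds hrpos),
          self_mem_nhdsWithin] with w hw1 hw2
        exact hlow w hw1.le hw2
      have hrS : r ∈ S := by
        refine ⟨⟨hr0, hrt⟩, ?_⟩
        rw [min_eq_right (hfr.trans hflmr)]
        refine le_antisymm (le_csInf (⟨f r, r, ⟨hr0, le_refl r⟩, rfl⟩ :
            (f '' Icc (0:ℝ) r).Nonempty) ?_)
          (csInf_le (hbdds r hrt) ⟨r, ⟨hr0, le_refl r⟩, rfl⟩)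
        rintro y ⟨u, hu, rfl⟩
        rcases eq_or_lt_of_le hu.2 with h | h
        · rw [h]
        · exact le_trans hfr (hlow u hu.1 h)
      have hrT' : r = T := le_antisymm (hT ▸ le_csSup hSbdd hrS) hrT
      rw [hrT'] at hfr
      linarith
  -- Step 4 : final computation
  have hG : sInf ((fun s => min (f s) 0) '' Icc (0:ℝ) t) = min (sInf (f '' Icc (0:ℝ) t)) 0 := by
    have hlb : ∀ y ∈ (fun s => min (f s) 0) '' Icc (0:ℝ) t,
        min (sInf (f '' Icc (0:ℝ) t)) 0 ≤ y := by
      rintro y ⟨s, hs, rfl⟩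
      exact min_le_min (csInf_le hbdd ⟨s, hs, rfl⟩) (le_refl 0)
    have hGbdd : BddBelow ((fun s => min (f s) 0) '' Icc (0:ℝ) t) :=
      ⟨min (sInf (f '' Icc (0:ℝ) t)) 0, hlb⟩
    have hGne : ((fun s => min (f s) 0) '' Icc (0:ℝ) t).Nonempty :=
      ⟨min (f 0) 0, 0, ⟨le_refl 0, ht⟩, rfl⟩
    refine le_antisymm (le_min ?_ ?_) (le_csInf hGne hlb)
    · refine le_csInf ⟨f 0, 0, ⟨le_refl 0, ht⟩, rfl⟩ ?_
      rintro y ⟨s, hs, rfl⟩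
      exact le_trans (csInf_le hGbdd ⟨s, hs, rfl⟩) (min_le_left _ _)
    · exact le_trans (csInf_le hGbdd ⟨0, ⟨le_refl 0, ht⟩, rfl⟩) (min_le_right _ _)
  rw [hG, heq, ← hTS.2, ← min_assoc]
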